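/- arXiv:2512.18874 — 2 statements merged into one kernel-verified Lean document; each statement's English description precedes it below -/
import Mathlib

section
/- Fix λ > 0 and constants c₁, c₂⁻, c₂⁺, c₃ ≥ 0 with c₁ + c₂⁻ + c₂⁺ + c₃ = 1 and c₁ ≠ 1. For every bounded continuous g : ℝ → ℝ vanishing at ±∞ there exists a function f : ℝ → ℝ, continuous on ℝ, twice differentiable on ℝ ∖ {0} with one-sided second derivatives at 0, vanishing at ±∞, satisfying c₁ f(0) + c₂⁻ f'(0−) − c₂⁺ f'(0+) + (c₃/2) f''(0+) = 0 and λ f(x) − (1/2) f''(x) = g(x) for all x ≠ 0, with λ f(0) − (1/2) f''(0+) = g(0). -/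
open Filter Set

section helpers
open MeasureTheory Real

lemma expI {s : ℝ} (hs : 0 < s) (a b : ℝ) :
    ∫ t in a..b, Real.exp (s*t) = (Real.exp (s*b) - Real.exp (s*a))/s := by
  rw [intervalIntegral.integral_comp_mul_left (fun t => Real.exp t) hs.ne']
  simp [integral_exp, smul_eq_mul]
  ring

lemma expcont {s : ℝ} : Continuous (fun t => Real.exp (s*t)) :=
  Real.continuous_exp.comp (continuous_const.mul continuous_id)

lemma expIic_int {s : ℝ} (hs : 0 < s) (x : ℝ) :
    IntegrableOn (fun t => Real.exp (s*t)) (Iic x) := by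
  refine integrableOn_Iic_of_intervalIntegral_norm_bounded (Real.exp (s*x)/s) x
    (fun y => ((expcont (s := s)).intervalIntegrable _ _).1) tendsto_id ?_
  filter_upwards [Iic_mem_atBot x] with y hy
  simp only [id]
  simp_rw [Real.norm_of_nonneg (Real.exp_pos _).le, expI hs]
  have h1 := (Real.exp_pos (s*y)).le
  rw [div_le_div_iff_of_pos_right hs]
  linarith

lemma expIic_val {s : ℝ} (hs : 0 < s) (x : ℝ) :
    ∫ t in Iic x, Real.exp (s*t) = Real.exp (s*x)/s := by
  refine tendsto_nhds_unique
    (intervalIntegral_tendsto_integral_Iic _ (expIic_int hs x) tendsto_id) ?_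
  simp only [id]
  simp_rw [expI hs]
  have h1 : Tendsto (fun y : ℝ => Real.exp (s*y)) atBot (nhds 0) :=
    Real.tendsto_exp_atBot.comp (Tendsto.const_mul_atBot hs tendsto_id)
  have := ((tendsto_const_nhds (x := Real.exp (s*x))).sub h1).div_const s
  simpa using this

lemma U_int {s : ℝ} (hs : 0 < s) {g : ℝ → ℝ} (hg : Continuous g) {M : ℝ}
    (hM : ∀ x, |g x| ≤ M) (x : ℝ) :
    IntegrableOn (fun t => Real.exp (s*t) * g t) (Iic x) := by
  have := (expIic_int hs x).bdd_mul hg.aestronglyMeasurable.restrict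
    (ae_of_all _ fun t => by simpa using hM t)
  exact this.congr (ae_of_all _ fun t => mul_comm _ _)

lemma U_sub {s : ℝ} (hs : 0 < s) {g : ℝ → ℝ} (hg : Continuous g) {M : ℝ}
    (hM : ∀ x, |g x| ≤ M) (a b : ℝ) :
    (∫ t in Iic b, Real.exp (s*t) * g t) - ∫ t in Iic a, Real.exp (s*t) * g t
      = ∫ t in a..b, Real.exp (s*t) * g t :=
  intervalIntegral.integral_Iic_sub_Iic (U_int hs hg hM a) (U_int hs hg hM b)

lemma U_deriv {s : ℝ} (hs : 0 < s) {g : ℝ → ℝ} (hg : Continuous g) {M : ℝ}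
    (hM : ∀ x, |g x| ≤ M) (x : ℝ) :
    HasDerivAt (fun x => ∫ t in Iic x, Real.exp (s*t) * g t) (Real.exp (s*x) * g x) x := by
  have hcont : Continuous (fun t => Real.exp (s*t) * g t) :=
    (Real.continuous_exp.comp (continuous_const.mul continuous_id)).mul hg
  have key : ∀ y : ℝ, (∫ t in Iic y, Real.exp (s*t) * g t)
      = (∫ t in Iic 0, Real.exp (s*t) * g t) + ∫ t in (0:ℝ)..y, Real.exp (s*t) * g t := by
    intro y
    rw [← U_sub hs hg hM 0 y]; ring
  have hd : HasDerivAt (fun y => (∫ t in Iic 0, Real.exp (s*t) * g t)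
      + ∫ t in (0:ℝ)..y, Real.exp (s*t) * g t) (Real.exp (s*x) * g x) x := by
    refine HasDerivAt.const_add _ ?_
    exact intervalIntegral.integral_hasDerivAt_right (hcont.intervalIntegrable _ _)
      (hcont.stronglyMeasurableAtFilter _ _) hcont.continuousAt
  exact hd.congr_of_eventuallyEq (Eventually.of_forall key)

lemma U_bound {s : ℝ} (hs : 0 < s) {g : ℝ → ℝ} (hg : Continuous g) {M : ℝ}
    (hM : ∀ x, |g x| ≤ M) {C x : ℝ} (hC : ∀ t ≤ x, |g t| ≤ C) :
    |∫ t in Iic x, Real.exp (s*t) * g t| ≤ C * (Real.exp (s*x) / s) := by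
  have h1 : ‖∫ t in Iic x, Real.exp (s*t) * g t‖
      ≤ ∫ t in Iic x, C * Real.exp (s*t) := by
    refine norm_integral_le_of_norm_le ((expIic_int hs x).const_mul C) ?_
    filter_upwards [ae_restrict_mem measurableSet_Iic] with t ht
    rw [norm_mul, Real.norm_of_nonneg (Real.exp_pos _).le, mul_comm]
    exact mul_le_mul_of_nonneg_right (by simpa using hC t ht) (Real.exp_pos _).le
  rw [Real.norm_eq_abs] at h1
  rwa [integral_const_mul, expIic_val hs x] at h1

lemma U_atBot {s : ℝ} (hs : 0 < s) {g : ℝ → ℝ} (hg : Continuous g) {M : ℝ}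
    (hM : ∀ x, |g x| ≤ M) (hgbot : Tendsto g atBot (nhds 0)) :
    Tendsto (fun x => Real.exp (-(s*x)) * ∫ t in Iic x, Real.exp (s*t) * g t)
      atBot (nhds 0) := by
  rw [NormedAddCommGroup.tendsto_nhds_zero]
  intro ε hε
  have hε2 : 0 < ε/2*s := by positivity
  obtain ⟨X, hX⟩ := (hgbot.eventually (Metric.ball_mem_nhds (0:ℝ) hε2)).exists_forall_of_atBot
  filter_upwards [Iic_mem_atBot X] with x hx
  have hC : ∀ t ≤ x, |g t| ≤ ε/2*s := fun t ht => by
    have := hX t (ht.trans hx)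
    simp only [Metric.mem_ball, Real.dist_eq, sub_zero] at this
    exact this.le
  have h1 := U_bound hs hg hM hC
  rw [Real.norm_eq_abs, abs_mul, abs_of_pos (Real.exp_pos _)]
  calc Real.exp (-(s*x)) * |∫ t in Iic x, Real.exp (s*t) * g t|
      ≤ Real.exp (-(s*x)) * (ε/2*s * (Real.exp (s*x)/s)) :=
        mul_le_mul_of_nonneg_left h1 (Real.exp_pos _).le
    _ = ε/2 := by
        rw [Real.exp_neg]
        field_simp
    _ < ε := by linarith

lemma U_atTop {s : ℝ} (hs : 0 < s) {g : ℝ → ℝ} (hg : Continuous g) {M : ℝ}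
    (hM : ∀ x, |g x| ≤ M) (hgtop : Tendsto g atTop (nhds 0)) :
    Tendsto (fun x => Real.exp (-(s*x)) * ∫ t in Iic x, Real.exp (s*t) * g t)
      atTop (nhds 0) := by
  rw [NormedAddCommGroup.tendsto_nhds_zero]
  intro ε hε
  have hε2 : 0 < ε/4*s := by positivity
  obtain ⟨X, hX⟩ := (hgtop.eventually (Metric.ball_mem_nhds (0:ℝ) hε2)).exists_forall_of_atTop
  have hexp0 : Tendsto (fun x : ℝ => Real.exp (-(s*x))) atTop (nhds 0) :=
    Real.tendsto_exp_atBot.comp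
      (tendsto_neg_atTop_atBot.comp (Tendsto.const_mul_atTop hs tendsto_id))
  have hUX : Tendsto (fun x => Real.exp (-(s*x)) * |∫ t in Iic X, Real.exp (s*t) * g t|)
      atTop (nhds 0) := by simpa using hexp0.mul_const _
  filter_upwards [Ici_mem_atTop X,
      hUX.eventually (gt_mem_nhds (show (0:ℝ) < ε/2 by linarith))] with x hx h2
  have hXx : X ≤ x := hx
  have hval : ∫ t in X..x, ε/4*s*Real.exp (s*t)
      = ε/4*(Real.exp (s*x) - Real.exp (s*X)) := by
    rw [intervalIntegral.integral_const_mul, expI hs]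
    field_simp
  have hIb : |∫ t in X..x, Real.exp (s*t) * g t|
      ≤ ε/4*(Real.exp (s*x) - Real.exp (s*X)) := by
    have := intervalIntegral.norm_integral_le_of_norm_le
      (f := fun t => Real.exp (s*t) * g t) (g := fun t => ε/4*s*Real.exp (s*t))
      (μ := volume) (a := X) (b := x) hXx ?_ ?_
    · rw [hval] at this
      rw [Real.norm_eq_abs] at this
      exact this
    · refine ae_of_all _ fun t ht => ?_
      rw [norm_mul, Real.norm_of_nonneg (Real.exp_pos _).le]
      have hgt : |g t| ≤ ε/4*s := by
        have := hX t ht.1.le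
        simp only [Metric.mem_ball, Real.dist_eq, sub_zero] at this
        exact this.le
      calc Real.exp (s*t) * ‖g t‖ ≤ Real.exp (s*t) * (ε/4*s) :=
            mul_le_mul_of_nonneg_left (by simpa using hgt) (Real.exp_pos _).le
        _ = ε/4*s*Real.exp (s*t) := by ring
    · exact (Continuous.intervalIntegrable (by continuity) _ _)
  have hsplit : (∫ t in Iic x, Real.exp (s*t) * g t)
      = (∫ t in Iic X, Real.exp (s*t) * g t) + ∫ t in X..x, Real.exp (s*t) * g t := by
    rw [← U_sub hs hg hM X x]; ring
  rw [Real.norm_eq_abs, abs_mul, abs_of_pos (Real.exp_pos _), hsplit]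
  have hepos := Real.exp_pos (-(s*x))
  have hkey : Real.exp (-(s*x)) * Real.exp (s*x) = 1 := by
    rw [← Real.exp_add]; simp
  have hXpos := (Real.exp_pos (s*X)).le
  calc Real.exp (-(s*x)) * |(∫ t in Iic X, Real.exp (s*t) * g t) + ∫ t in X..x, Real.exp (s*t) * g t|
      ≤ Real.exp (-(s*x)) * (|∫ t in Iic X, Real.exp (s*t) * g t| + ε/4*(Real.exp (s*x) - Real.exp (s*X))) := by
        refine mul_le_mul_of_nonneg_left ((abs_add_le _ _).trans ?_) hepos.le
        exact (add_le_add_iff_left _).2 hIb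
    _ < ε := by nlinarith [h2, mul_nonneg hepos.le hXpos, hkey]

lemma bound_of_tendsto {g : ℝ → ℝ} (hg : Continuous g)
    (hgtop : Tendsto g atTop (nhds 0)) (hgbot : Tendsto g atBot (nhds 0)) :
    ∃ M, ∀ x, |g x| ≤ M := by
  have hcoc : Tendsto g (cocompact ℝ) (nhds 0) := by
    rw [cocompact_eq_atBot_atTop]
    exact hgbot.sup hgtop
  have h1 : ∀ᶠ x in cocompact ℝ, |g x| ≤ 1 := by
    have := hcoc.eventually (Metric.closedBall_mem_nhds (0:ℝ) one_pos)
    simpa [Real.dist_eq] using this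
  obtain ⟨K, hK, hKsub⟩ := mem_cocompact.mp h1
  obtain ⟨C, hC⟩ := hK.exists_bound_of_continuousOn hg.continuousOn
  refine ⟨max C 1, fun x => ?_⟩
  by_cases hx : x ∈ K
  · exact le_max_of_le_left (by simpa using hC x hx)
  · exact le_max_of_le_right (hKsub hx)

/-- Solvability of the resolvent equation with Feller boundary condition at `0`:
for `λ > 0`, constants `c₁, c₂⁻, c₂⁺, c₃ ≥ 0` summing to `1` with `c₁ ≠ 1`, and any
continuous `g` vanishing at `±∞`, there is a continuous `f` vanishing at `±∞`, twice
differentiable away from `0` with one-sided first and second derivatives at `0`,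
satisfying the boundary condition and `λ f − (1/2) f'' = g` (also at `0`, using `f''(0+)`). -/
theorem stmt_12 (l : ℝ) (hl : 0 < l) (c₁ c₂m c₂p c₃ : ℝ)
    (hc₁ : 0 ≤ c₁) (hc₂m : 0 ≤ c₂m) (hc₂p : 0 ≤ c₂p) (hc₃ : 0 ≤ c₃)
    (hsum : c₁ + c₂m + c₂p + c₃ = 1) (hc₁ne : c₁ ≠ 1)
    (g : ℝ → ℝ) (hg : Continuous g)
    (hgtop : Tendsto g atTop (nhds 0)) (hgbot : Tendsto g atBot (nhds 0)) :
    ∃ (f f' f'' : ℝ → ℝ) (d0m d0p dd0p : ℝ),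
      Continuous f ∧
      Tendsto f atTop (nhds 0) ∧ Tendsto f atBot (nhds 0) ∧
      (∀ x : ℝ, x ≠ 0 → HasDerivAt f (f' x) x) ∧
      (∀ x : ℝ, x ≠ 0 → HasDerivAt f' (f'' x) x) ∧
      Tendsto f' (nhdsWithin 0 (Iio 0)) (nhds d0m) ∧
      Tendsto f' (nhdsWithin 0 (Ioi 0)) (nhds d0p) ∧
      Tendsto f'' (nhdsWithin 0 (Ioi 0)) (nhds dd0p) ∧
      c₁ * f 0 + c₂m * d0m - c₂p * d0p + (c₃ / 2) * dd0p = 0 ∧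
      (∀ x : ℝ, x ≠ 0 → l * f x - (1 / 2) * f'' x = g x) ∧
      l * f 0 - (1 / 2) * dd0p = g 0 := by
  obtain ⟨M, hM⟩ := bound_of_tendsto hg hgtop hgbot
  set s : ℝ := Real.sqrt (2*l) with hs_def
  have hs : 0 < s := Real.sqrt_pos.2 (by linarith)
  have hs2 : s^2 = 2*l := Real.sq_sqrt (by linarith)
  have hl' : l = s^2/2 := by rw [hs2]; ring
  -- reflected g
  set gh : ℝ → ℝ := fun t => g (-t) with hgh_def
  have hghc : Continuous gh := hg.comp continuous_neg
  have hMh : ∀ x, |gh x| ≤ M := fun x => hM (-x)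
  have hghtop : Tendsto gh atTop (nhds 0) := hgbot.comp tendsto_neg_atTop_atBot
  have hghbot : Tendsto gh atBot (nhds 0) := hgtop.comp tendsto_neg_atBot_atTop
  -- the two half-line transforms
  set U : ℝ → ℝ := fun x => ∫ t in Iic x, Real.exp (s*t) * g t with hU_def
  set Uh : ℝ → ℝ := fun x => ∫ t in Iic x, Real.exp (s*t) * gh t with hUh_def
  set V : ℝ → ℝ := fun x => Uh (-x) with hV_def
  have hU : ∀ x, HasDerivAt U (Real.exp (s*x) * g x) x := U_deriv hs hg hM
  have hUh : ∀ x, HasDerivAt Uh (Real.exp (s*x) * gh x) x := U_deriv hs hghc hMh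
  have hV : ∀ x, HasDerivAt V (-(Real.exp (-(s*x)) * g x)) x := by
    intro x
    have := (hUh (-x)).comp x (hasDerivAt_neg x)
    refine this.congr_deriv (Eq.symm ?_)
    simp only [hgh_def, neg_neg]
    ring_nf
  -- exponential derivative helpers
  have hexp1 : ∀ x : ℝ, HasDerivAt (fun x => Real.exp (-(s*x)))
      (Real.exp (-(s*x)) * (-s)) x := by
    intro x
    have ha : HasDerivAt (fun x : ℝ => s*x) s x := by
      simpa using (hasDerivAt_id x).const_mul s
    exact ha.neg.exp
  have hexp2 : ∀ x : ℝ, HasDerivAt (fun x => Real.exp (s*x))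
      (Real.exp (s*x) * s) x := by
    intro x
    have ha : HasDerivAt (fun x : ℝ => s*x) s x := by
      simpa using (hasDerivAt_id x).const_mul s
    exact ha.exp
  have hkey : ∀ x : ℝ, Real.exp (-(s*x)) * Real.exp (s*x) = 1 := by
    intro x; rw [← Real.exp_add]; simp
  -- particular solution
  set fp : ℝ → ℝ := fun x => (1/s) * (Real.exp (-(s*x)) * U x + Real.exp (s*x) * V x)
    with hfp_def
  set fp' : ℝ → ℝ := fun x => -(Real.exp (-(s*x)) * U x) + Real.exp (s*x) * V x
    with hfp'_def
  set fp'' : ℝ → ℝ := fun x =>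
      s * (Real.exp (-(s*x)) * U x) + s * (Real.exp (s*x) * V x) - 2 * g x with hfp''_def
  have hfp : ∀ x, HasDerivAt fp (fp' x) x := by
    intro x
    have h := (((hexp1 x).mul (hU x)).add ((hexp2 x).mul (hV x))).const_mul (1/s)
    refine h.congr_deriv (Eq.symm ?_)
    simp only [hfp'_def]
    field_simp
    ring
  have hfpd : ∀ x, HasDerivAt fp' (fp'' x) x := by
    intro x
    have h := (((hexp1 x).mul (hU x)).neg).add ((hexp2 x).mul (hV x))
    refine h.congr_deriv (Eq.symm ?_)
    simp only [hfp''_def]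
    linear_combination (2 * g x) * hkey x
  have hUc : Continuous U := continuous_iff_continuousAt.2 fun x => (hU x).continuousAt
  have hVc : Continuous V := continuous_iff_continuousAt.2 fun x => (hV x).continuousAt
  have hfpc : Continuous fp := continuous_iff_continuousAt.2 fun x => (hfp x).continuousAt
  have hfp'c : Continuous fp' := continuous_iff_continuousAt.2 fun x => (hfpd x).continuousAt
  have hexpc1 : Continuous (fun x : ℝ => Real.exp (-(s*x))) :=
    Real.continuous_exp.comp ((continuous_const.mul continuous_id).neg)
  have hexpc2 : Continuous (fun x : ℝ => Real.exp (s*x)) :=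
    Real.continuous_exp.comp (continuous_const.mul continuous_id)
  have hexpabs : Continuous (fun x : ℝ => Real.exp (-(s*|x|))) :=
    Real.continuous_exp.comp ((continuous_const.mul continuous_abs).neg)
  have hfp''c : Continuous fp'' := by
    rw [hfp''_def]
    exact ((continuous_const.mul (hexpc1.mul hUc)).add
      (continuous_const.mul (hexpc2.mul hVc))).sub (continuous_const.mul hg)
  -- limits of fp at ±∞
  have hT1top : Tendsto (fun x => Real.exp (-(s*x)) * U x) atTop (nhds 0) :=
    U_atTop hs hg hM hgtop
  have hT1bot : Tendsto (fun x => Real.exp (-(s*x)) * U x) atBot (nhds 0) :=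
    U_atBot hs hg hM hgbot
  have hT2top : Tendsto (fun x => Real.exp (s*x) * V x) atTop (nhds 0) := by
    have := (U_atBot hs hghc hMh hghbot).comp tendsto_neg_atTop_atBot
    refine this.congr fun x => ?_
    simp only [hV_def, hUh_def, Function.comp]
    ring_nf
  have hT2bot : Tendsto (fun x => Real.exp (s*x) * V x) atBot (nhds 0) := by
    have := (U_atTop hs hghc hMh hghtop).comp tendsto_neg_atBot_atTop
    refine this.congr fun x => ?_
    simp only [hV_def, hUh_def, Function.comp]
    ring_nf
  have hfptop : Tendsto fp atTop (nhds 0) := by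
    have := (hT1top.add hT2top).const_mul (1/s)
    simpa [hfp_def] using this
  have hfpbot : Tendsto fp atBot (nhds 0) := by
    have := (hT1bot.add hT2bot).const_mul (1/s)
    simpa [hfp_def] using this
  -- the constant A
  set d : ℝ := c₁ + s*(c₂m+c₂p) + l*c₃ with hd_def
  have hd : 0 < d := by
    rcases hc₁.lt_or_eq with h1 | h1
    · have h2 : 0 ≤ s*(c₂m+c₂p) := mul_nonneg hs.le (by linarith)
      have h3 : 0 ≤ l*c₃ := mul_nonneg hl.le hc₃
      rw [hd_def]; linarith
    · rcases hc₃.lt_or_eq with h3 | h3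
      · have h2 : 0 ≤ s*(c₂m+c₂p) := mul_nonneg hs.le (by linarith)
        have h4 : 0 < l*c₃ := mul_pos hl h3
        rw [hd_def]; linarith
      · have h5 : 0 < c₂m + c₂p := by linarith
        have h2 : 0 < s*(c₂m+c₂p) := mul_pos hs h5
        have h4 : 0 ≤ l*c₃ := mul_nonneg hl.le hc₃
        rw [hd_def]; linarith
  set B : ℝ := c₁ * fp 0 + (c₂m - c₂p) * fp' 0 + (c₃/2) * fp'' 0 with hB_def
  set A : ℝ := -B / d with hA_def
  have hAd : A * d = -B := by rw [hA_def]; field_simp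
  clear_value A B d
  -- the solution
  refine ⟨fun x => fp x + A * Real.exp (-(s*|x|)),
    fun x => fp' x + A * (-(s * Real.sign x)) * Real.exp (-(s*|x|)),
    fun x => fp'' x + A * (2*l) * Real.exp (-(s*|x|)),
    fp' 0 + A*s, fp' 0 - A*s, fp'' 0 + A*(2*l), ?_, ?_, ?_, ?_, ?_, ?_, ?_, ?_, ?_, ?_, ?_⟩
  · -- continuity
    exact hfpc.add (continuous_const.mul hexpabs)
  · -- tendsto atTop
    have h1 : Tendsto (fun x : ℝ => A * Real.exp (-(s*|x|))) atTop (nhds 0) := by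
      have h2 : Tendsto (fun x : ℝ => Real.exp (-(s*|x|))) atTop (nhds 0) :=
        Real.tendsto_exp_atBot.comp (tendsto_neg_atTop_atBot.comp
          (Tendsto.const_mul_atTop hs tendsto_abs_atTop_atTop))
      simpa using h2.const_mul A
    simpa using hfptop.add h1
  · -- tendsto atBot
    have h1 : Tendsto (fun x : ℝ => A * Real.exp (-(s*|x|))) atBot (nhds 0) := by
      have h2 : Tendsto (fun x : ℝ => Real.exp (-(s*|x|))) atBot (nhds 0) :=
        Real.tendsto_exp_atBot.comp (tendsto_neg_atTop_atBot.comp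
          (Tendsto.const_mul_atTop hs tendsto_abs_atBot_atTop))
      simpa using h2.const_mul A
    simpa using hfpbot.add h1
  · -- f' derivative of f away from 0
    intro x hx
    rcases hx.lt_or_gt with hx' | hx'
    · -- x < 0 : locally f = fp + A exp(s x)
      have hb : HasDerivAt (fun y => fp y + A * Real.exp (s*y))
          (fp' x + A * (Real.exp (s*x) * s)) x := (hfp x).add ((hexp2 x).const_mul A)
      have hev : (fun y => fp y + A * Real.exp (-(s*|y|)))
          =ᶠ[nhds x] (fun y => fp y + A * Real.exp (s*y)) := by
        filter_upwards [Iio_mem_nhds hx'] with y hy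
        rw [abs_of_neg hy]
        ring_nf
      refine (hev.hasDerivAt_iff.2 ?_)
      refine hb.congr_deriv (Eq.symm ?_)
      beta_reduce
      rw [Real.sign_of_neg hx', abs_of_neg hx']
      ring_nf
    · -- x > 0
      have hb : HasDerivAt (fun y => fp y + A * Real.exp (-(s*y)))
          (fp' x + A * (Real.exp (-(s*x)) * (-s))) x := (hfp x).add ((hexp1 x).const_mul A)
      have hev : (fun y => fp y + A * Real.exp (-(s*|y|)))
          =ᶠ[nhds x] (fun y => fp y + A * Real.exp (-(s*y))) := by
        filter_upwards [Ioi_mem_nhds hx'] with y hy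
        rw [abs_of_pos hy]
      refine (hev.hasDerivAt_iff.2 ?_)
      refine hb.congr_deriv (Eq.symm ?_)
      beta_reduce
      rw [Real.sign_of_pos hx', abs_of_pos hx']
      ring_nf
  · -- f'' derivative of f'
    intro x hx
    rcases hx.lt_or_gt with hx' | hx'
    · have hb : HasDerivAt (fun y => fp' y + A * s * Real.exp (s*y))
          (fp'' x + A * s * (Real.exp (s*x) * s)) x :=
        (hfpd x).add ((hexp2 x).const_mul (A*s))
      have hev : (fun y => fp' y + A * (-(s * Real.sign y)) * Real.exp (-(s*|y|)))
          =ᶠ[nhds x] (fun y => fp' y + A * s * Real.exp (s*y)) := by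
        filter_upwards [Iio_mem_nhds hx'] with y hy
        rw [Real.sign_of_neg hy, abs_of_neg hy]
        ring_nf
      refine (hev.hasDerivAt_iff.2 ?_)
      refine hb.congr_deriv (Eq.symm ?_)
      beta_reduce
      rw [abs_of_neg hx']
      have harg : -(s * -x) = s * x := by ring
      rw [harg]
      linear_combination (-(A * Real.exp (s*x))) * hs2
    · have hb : HasDerivAt (fun y => fp' y - A * s * Real.exp (-(s*y)))
          (fp'' x - A * s * (Real.exp (-(s*x)) * (-s))) x :=
        (hfpd x).sub ((hexp1 x).const_mul (A*s))
      have hev : (fun y => fp' y + A * (-(s * Real.sign y)) * Real.exp (-(s*|y|)))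
          =ᶠ[nhds x] (fun y => fp' y - A * s * Real.exp (-(s*y))) := by
        filter_upwards [Ioi_mem_nhds hx'] with y hy
        rw [Real.sign_of_pos hy, abs_of_pos hy]
        ring_nf
      refine (hev.hasDerivAt_iff.2 ?_)
      refine hb.congr_deriv (Eq.symm ?_)
      beta_reduce
      rw [abs_of_pos hx']
      linear_combination (-A * Real.exp (-(s*x))) * hs2
  · -- left limit of f'
    have hbc : Continuous (fun y => fp' y + A * s * Real.exp (s*y)) :=
      hfp'c.add (continuous_const.mul hexpc2 : Continuous fun y => (A*s) * Real.exp (s*y))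
    have h0 : Tendsto (fun y => fp' y + A * s * Real.exp (s*y))
        (nhdsWithin 0 (Iio 0)) (nhds (fp' 0 + A*s)) := by
      have := (hbc.tendsto 0).mono_left (nhdsWithin_le_nhds (s := Iio 0))
      simpa using this
    refine h0.congr' ?_
    filter_upwards [self_mem_nhdsWithin] with y hy
    rw [Real.sign_of_neg hy, abs_of_neg hy]
    ring_nf
  · -- right limit of f'
    have hbc : Continuous (fun y => fp' y - A * s * Real.exp (-(s*y))) :=
      hfp'c.sub (continuous_const.mul hexpc1 : Continuous fun y => (A*s) * Real.exp (-(s*y)))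
    have h0 : Tendsto (fun y => fp' y - A * s * Real.exp (-(s*y)))
        (nhdsWithin 0 (Ioi 0)) (nhds (fp' 0 - A*s)) := by
      have := (hbc.tendsto 0).mono_left (nhdsWithin_le_nhds (s := Ioi 0))
      simpa using this
    refine h0.congr' ?_
    filter_upwards [self_mem_nhdsWithin] with y hy
    rw [Real.sign_of_pos hy, abs_of_pos hy]
    ring_nf
  · -- right limit of f''
    have hbc : Continuous (fun y => fp'' y + A * (2*l) * Real.exp (-(s*|y|))) :=
      hfp''c.add (continuous_const.mul hexpabs)
    have h0 := (hbc.tendsto 0).mono_left (nhdsWithin_le_nhds (s := Ioi 0))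
    simpa using h0
  · -- boundary condition
    show c₁ * (fp 0 + A * Real.exp (-(s*|0|))) + c₂m * (fp' 0 + A*s)
        - c₂p * (fp' 0 - A*s) + (c₃/2) * (fp'' 0 + A*(2*l)) = 0
    rw [abs_zero, mul_zero, neg_zero, Real.exp_zero]
    have hBd : c₁ * fp 0 + (c₂m - c₂p) * fp' 0 + (c₃/2) * fp'' 0 = B := by rw [hB_def]
    linear_combination hAd + hBd - A * hd_def
  · -- resolvent equation away from 0
    intro x hx
    show l * (fp x + A * Real.exp (-(s*|x|)))
        - (1/2) * (fp'' x + A * (2*l) * Real.exp (-(s*|x|))) = g x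
    have hODE : l * fp x - (1/2) * fp'' x = g x := by
      simp only [hfp_def, hfp''_def]
      rw [hl']
      field_simp
      ring
    linear_combination hODE
  · -- resolvent equation at 0
    show l * (fp 0 + A * Real.exp (-(s*|0|))) - (1/2) * (fp'' 0 + A*(2*l)) = g 0
    rw [abs_zero, mul_zero, neg_zero, Real.exp_zero]
    have hODE : l * fp 0 - (1/2) * fp'' 0 = g 0 := by
      simp only [hfp_def, hfp''_def]
      rw [hl']
      field_simp
      ring
    linear_combination hODE

end helpers
end

section
/- Let c₁, c₂⁻, c₂⁺, c₃ ≥ 0 with c₁ + c₂⁻ + c₂⁺ + c₃ = 1 and c₁ ≠ 1, and let β > 0. Suppose u : ℝ → ℝ is continuous, tends to 0 at ±∞, satisfies β u = (1/2) u'' on ℝ ∖ {0}, and satisfies the boundary condition c₁ u(0) + c₂⁻ u'(0−) − c₂⁺ u'(0+) + (c₃/2) u''(0+) = 0. Then u ≡ 0. -/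
open Filter Set

lemma constOnIoi {f : ℝ → ℝ} (hf : ∀ x ∈ Ioi (0:ℝ), HasDerivAt f 0 x) :
    ∀ a ∈ Ioi (0:ℝ), ∀ b ∈ Ioi (0:ℝ), f a = f b := by
  have key : ∀ a b : ℝ, 0 < a → a ≤ b → f b = f a := by
    intro a b ha hab
    have hcont : ContinuousOn f (Icc a b) := fun x hx =>
      ((hf x (lt_of_lt_of_le ha hx.1)).continuousAt).continuousWithinAt
    exact constant_of_has_deriv_right_zero hcont
      (fun x hx => (hf x (lt_of_lt_of_le ha hx.1)).hasDerivWithinAt) b ⟨hab, le_refl b⟩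
  intro a ha b hb
  rcases le_total a b with h | h
  · exact (key a b ha h).symm
  · exact key b a hb h

lemma halfline (k : ℝ) (hk : 0 < k) (f f' : ℝ → ℝ)
    (hc : ContinuousWithinAt f (Ioi 0) 0)
    (h1 : ∀ x ∈ Ioi (0:ℝ), HasDerivAt f (f' x) x)
    (h2 : ∀ x ∈ Ioi (0:ℝ), ∃ y, HasDerivAt f' y x ∧ y = k^2 * f x)
    (htop : Tendsto f atTop (nhds 0)) :
    (∀ x, 0 ≤ x → f x = f 0 * Real.exp (-(k*x))) ∧
    (∀ x, 0 < x → f' x = -(k * f 0) * Real.exp (-(k*x))) := by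
  have hexp : ∀ (c x : ℝ), HasDerivAt (fun t => Real.exp (c*t)) (c * Real.exp (c*x)) x := by
    intro c x
    have := ((hasDerivAt_id x).const_mul c).exp
    simpa [mul_comm] using this
  have hexpmul : ∀ c x : ℝ, Real.exp (c*x) * Real.exp (-(c*x)) = 1 := by
    intro c x; rw [← Real.exp_add]; simp
  -- H x = (f' x + k f x) e^{-kx} is constant on Ioi 0
  have hH : ∀ x ∈ Ioi (0:ℝ),
      HasDerivAt (fun x => (f' x + k * f x) * Real.exp (-k*x)) 0 x := by
    intro x hx
    obtain ⟨y, hy, hyval⟩ := h2 x hx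
    have hsum : HasDerivAt (fun x => f' x + k * f x) (y + k * f' x) x :=
      hy.add ((h1 x hx).const_mul k)
    have := hsum.mul (hexp (-k) x)
    refine this.congr_deriv ?_
    rw [hyval]; ring
  have hG : ∀ x ∈ Ioi (0:ℝ),
      HasDerivAt (fun x => (f' x - k * f x) * Real.exp (k*x)) 0 x := by
    intro x hx
    obtain ⟨y, hy, hyval⟩ := h2 x hx
    have hsum : HasDerivAt (fun x => f' x - k * f x) (y - k * f' x) x :=
      hy.sub ((h1 x hx).const_mul k)
    have := hsum.mul (hexp k x)
    refine this.congr_deriv ?_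
    rw [hyval]; ring
  set C := (f' 1 + k * f 1) * Real.exp (-k*1) with hCdef
  set D := (f' 1 - k * f 1) * Real.exp (k*1) with hDdef
  have hHC : ∀ x ∈ Ioi (0:ℝ), (f' x + k * f x) * Real.exp (-k*x) = C :=
    fun x hx => constOnIoi hH x hx 1 (by norm_num)
  have hGD : ∀ x ∈ Ioi (0:ℝ), (f' x - k * f x) * Real.exp (k*x) = D :=
    fun x hx => constOnIoi hG x hx 1 (by norm_num)
  have hHC' : ∀ x ∈ Ioi (0:ℝ), f' x + k * f x = C * Real.exp (k*x) := by
    intro x hx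
    calc f' x + k * f x
        = ((f' x + k * f x) * Real.exp (-k*x)) * Real.exp (k*x) := by
          rw [mul_assoc, mul_comm (Real.exp (-k*x)), neg_mul, hexpmul k x, mul_one]
      _ = C * Real.exp (k*x) := by rw [hHC x hx]
  have hGD' : ∀ x ∈ Ioi (0:ℝ), f' x - k * f x = D * Real.exp (-(k*x)) := by
    intro x hx
    calc f' x - k * f x
        = ((f' x - k * f x) * Real.exp (k*x)) * Real.exp (-(k*x)) := by
          rw [mul_assoc, hexpmul k x, mul_one]
      _ = D * Real.exp (-(k*x)) := by rw [hGD x hx]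
  -- exp(-kx) → 0 at top
  have hexp_bot : Tendsto (fun x : ℝ => Real.exp (-(k*x))) atTop (nhds 0) := by
    apply Real.tendsto_exp_atBot.comp
    have hid : Tendsto (fun x : ℝ => x) atTop atTop := tendsto_id
    have : Tendsto (fun x : ℝ => -k * x) atTop atBot :=
      (Filter.tendsto_const_mul_atBot_of_neg (show -k < 0 by linarith)).2 hid
    simpa [neg_mul] using this
  -- C = 0
  have hC0 : C = 0 := by
    have hlhs : Tendsto (fun x => 2*k * f x + D * Real.exp (-(k*x))) atTop (nhds 0) := by
      have := ((htop.const_mul (2*k)).add (hexp_bot.const_mul D))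
      simpa using this
    have hev : (fun x => 2*k * f x + D * Real.exp (-(k*x))) =ᶠ[atTop]
        (fun x => C * Real.exp (k*x)) := by
      filter_upwards [eventually_gt_atTop (0:ℝ)] with x hx
      have e1 := hHC' x hx
      have e2 := hGD' x hx
      linarith
    have hC : Tendsto (fun x => C * Real.exp (k*x)) atTop (nhds 0) :=
      hlhs.congr' hev
    have hprod : Tendsto (fun x => (C * Real.exp (k*x)) * Real.exp (-(k*x)))
        atTop (nhds (0 * 0)) := hC.mul hexp_bot
    have : Tendsto (fun _ : ℝ => C) atTop (nhds 0) := by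
      simpa [mul_assoc, hexpmul] using hprod
    exact tendsto_nhds_unique tendsto_const_nhds this
  have hf' : ∀ x ∈ Ioi (0:ℝ), f' x = -(k * f x) := by
    intro x hx
    have := hHC' x hx
    rw [hC0, zero_mul] at this
    linarith
  -- F x = f x e^{kx} is constant on Ioi 0
  have hF : ∀ x ∈ Ioi (0:ℝ), HasDerivAt (fun x => f x * Real.exp (k*x)) 0 x := by
    intro x hx
    have := (h1 x hx).mul (hexp k x)
    refine this.congr_deriv ?_
    rw [hf' x hx]; ring
  set E := f 1 * Real.exp (k*1) with hEdef
  have hFE : ∀ x ∈ Ioi (0:ℝ), f x * Real.exp (k*x) = E :=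
    fun x hx => constOnIoi hF x hx 1 (by norm_num)
  have hE : E = f 0 := by
    have h1' : Tendsto (fun x => f x * Real.exp (k*x)) (nhdsWithin 0 (Ioi 0))
        (nhds (f 0 * Real.exp (k*0))) := by
      apply hc.mul
      exact ((Real.continuous_exp.comp (continuous_const.mul continuous_id)).continuousAt).continuousWithinAt
    have h2' : Tendsto (fun x => f x * Real.exp (k*x)) (nhdsWithin 0 (Ioi 0)) (nhds E) := by
      apply Tendsto.congr' _ (tendsto_const_nhds (α := ℝ) (f := nhdsWithin 0 (Ioi 0)))
      filter_upwards [self_mem_nhdsWithin] with x hx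
      exact (hFE x hx).symm
    have := tendsto_nhds_unique h2' h1'
    simpa using this
  have hfval : ∀ x, 0 ≤ x → f x = f 0 * Real.exp (-(k*x)) := by
    intro x hx
    rcases eq_or_lt_of_le hx with h | h
    · simp [← h]
    · have := hFE x h
      rw [hE] at this
      calc f x = (f x * Real.exp (k*x)) * Real.exp (-(k*x)) := by
            rw [mul_assoc, hexpmul, mul_one]
        _ = f 0 * Real.exp (-(k*x)) := by rw [this]
  refine ⟨hfval, fun x hx => ?_⟩
  rw [hf' x hx, hfval x hx.le]; ring

/-- Uniqueness: if `u` is continuous on `ℝ`, tends to `0` at `±∞`, solves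
`β u = (1/2) u''` away from `0`, and satisfies the Feller boundary condition
`c₁ u(0) + c₂⁻ u'(0−) − c₂⁺ u'(0+) + (c₃/2) u''(0+) = 0` with nonnegative constants
summing to `1` and `c₁ ≠ 1`, then `u ≡ 0`. -/
theorem stmt_13 (β : ℝ) (hβ : 0 < β) (c₁ c₂m c₂p c₃ : ℝ)
    (hc₁ : 0 ≤ c₁) (hc₂m : 0 ≤ c₂m) (hc₂p : 0 ≤ c₂p) (hc₃ : 0 ≤ c₃)
    (hsum : c₁ + c₂m + c₂p + c₃ = 1) (hc₁ne : c₁ ≠ 1)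
    (u u' u'' : ℝ → ℝ) (d0m d0p dd0p : ℝ)
    (hcont : Continuous u)
    (htop : Tendsto u atTop (nhds 0)) (hbot : Tendsto u atBot (nhds 0))
    (hderiv : ∀ x : ℝ, x ≠ 0 → HasDerivAt u (u' x) x)
    (hderiv2 : ∀ x : ℝ, x ≠ 0 → HasDerivAt u' (u'' x) x)
    (hode : ∀ x : ℝ, x ≠ 0 → β * u x = (1 / 2) * u'' x)
    (hd0m : Tendsto u' (nhdsWithin 0 (Iio 0)) (nhds d0m))
    (hd0p : Tendsto u' (nhdsWithin 0 (Ioi 0)) (nhds d0p))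
    (hdd0p : Tendsto u'' (nhdsWithin 0 (Ioi 0)) (nhds dd0p))
    (hbc : c₁ * u 0 + c₂m * d0m - c₂p * d0p + (c₃ / 2) * dd0p = 0) :
    ∀ x : ℝ, u x = 0 := by
  set k := Real.sqrt (2*β) with hkdef
  have hk : 0 < k := Real.sqrt_pos.mpr (by linarith)
  have hk2 : k^2 = 2*β := Real.sq_sqrt (by linarith)
  have hode' : ∀ x : ℝ, x ≠ 0 → u'' x = k^2 * u x := by
    intro x hx
    have := hode x hx
    rw [hk2]; linarith
  -- positive side
  obtain ⟨hp, hp'⟩ := halfline k hk u u' hcont.continuousWithinAt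
    (fun x hx => hderiv x (ne_of_gt hx))
    (fun x hx => ⟨u'' x, hderiv2 x (ne_of_gt hx), hode' x (ne_of_gt hx)⟩)
    htop
  -- negative side, via reflection
  have hneg : ∀ x : ℝ, x ∈ Ioi (0:ℝ) → (-x) ≠ (0:ℝ) := fun x hx => by
    simp only [mem_Ioi] at hx; intro h; rw [neg_eq_zero] at h; exact absurd h (ne_of_gt hx)
  obtain ⟨hn, hn'⟩ := halfline k hk (fun x => u (-x)) (fun x => -u' (-x))
    ((hcont.comp continuous_neg).continuousWithinAt)
    (by
      intro x hx
      have := ((hderiv (-x) (hneg x hx)).comp x (hasDerivAt_neg x))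
      simpa [Function.comp_def] using this.neg.neg)
    (by
      intro x hx
      refine ⟨u'' (-x), ?_, by simpa using hode' (-x) (hneg x hx)⟩
      have := ((hderiv2 (-x) (hneg x hx)).comp x (hasDerivAt_neg x)).neg
      simpa [Function.comp_def, Pi.neg_def] using this)
    (hbot.comp tendsto_neg_atTop_atBot)
  simp only [neg_zero] at hn hn'
  -- limits from the right for u' and u''
  have hlim_exp : Tendsto (fun x : ℝ => Real.exp (-(k*x))) (nhdsWithin 0 (Ioi 0)) (nhds 1) := by
    have : ContinuousAt (fun x : ℝ => Real.exp (-(k*x))) 0 :=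
      (Real.continuous_exp.comp (continuous_const.mul continuous_id).neg).continuousAt
    have h := this.tendsto.mono_left (nhdsWithin_le_nhds (s := Ioi 0))
    simpa using h
  have hd0p_val : d0p = -(k * u 0) := by
    have h1 : Tendsto u' (nhdsWithin 0 (Ioi 0)) (nhds (-(k * u 0) * 1)) := by
      apply Tendsto.congr' _ (hlim_exp.const_mul (-(k * u 0)))
      filter_upwards [self_mem_nhdsWithin] with x hx
      exact (hp' x hx).symm
    have := tendsto_nhds_unique hd0p h1
    simpa using this
  have hdd0p_val : dd0p = k^2 * u 0 := by
    have h1 : Tendsto u'' (nhdsWithin 0 (Ioi 0)) (nhds (k^2 * (u 0 * 1))) := by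
      apply Tendsto.congr' _ ((hlim_exp.const_mul (u 0)).const_mul (k^2))
      filter_upwards [self_mem_nhdsWithin] with x hx
      rw [hode' x (ne_of_gt hx), hp x hx.le]
    have := tendsto_nhds_unique hdd0p h1
    simpa [mul_assoc] using this
  -- limit from the left for u'
  have hd0m_val : d0m = k * u 0 := by
    have hlim_exp2 : Tendsto (fun x : ℝ => Real.exp (k*x)) (nhdsWithin 0 (Iio 0)) (nhds 1) := by
      have : ContinuousAt (fun x : ℝ => Real.exp (k*x)) 0 :=
        (Real.continuous_exp.comp (continuous_const.mul continuous_id)).continuousAt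
      have h := this.tendsto.mono_left (nhdsWithin_le_nhds (s := Iio 0))
      simpa using h
    have h1 : Tendsto u' (nhdsWithin 0 (Iio 0)) (nhds (k * u 0 * 1)) := by
      apply Tendsto.congr' _ (hlim_exp2.const_mul (k * u 0))
      filter_upwards [self_mem_nhdsWithin] with x hx
      have hx' : (0:ℝ) < -x := by simpa using hx
      have := hn' (-x) hx'
      simp only [neg_neg] at this
      have : u' x = k * u 0 * Real.exp (-(k * -x)) := by linarith
      rw [this]; ring_nf
    have := tendsto_nhds_unique hd0m h1
    simpa using this
  -- boundary condition gives u 0 = 0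
  have hbracket : 0 < c₁ + k * c₂m + k * c₂p + β * c₃ := by
    have hnz : 0 < c₂m + c₂p + c₃ := by
      rcases lt_or_eq_of_le (by positivity : (0:ℝ) ≤ c₂m + c₂p + c₃) with h | h
      · exact h
      · exact absurd (by linarith : c₁ = 1) hc₁ne
    rcases lt_or_eq_of_le hc₂m with h | h
    · nlinarith [mul_pos hk h, mul_nonneg hk.le hc₂p, mul_nonneg hβ.le hc₃]
    rcases lt_or_eq_of_le hc₂p with h2 | h2
    · nlinarith [mul_pos hk h2, mul_nonneg hβ.le hc₃]
    have h3 : 0 < c₃ := by linarith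
    nlinarith [mul_pos hβ h3]
  have hu0 : u 0 = 0 := by
    rw [hd0m_val, hd0p_val, hdd0p_val, hk2] at hbc
    have : u 0 * (c₁ + k * c₂m + k * c₂p + β * c₃) = 0 := by linarith [hbc]
    rcases mul_eq_zero.mp this with h | h
    · exact h
    · exact absurd h (ne_of_gt hbracket)
  -- conclude
  intro x
  rcases le_or_gt 0 x with h | h
  · rw [hp x h, hu0, zero_mul]
  · have hx' : (0:ℝ) ≤ -x := by linarith
    have := hn (-x) hx'
    simp only [neg_neg] at this
    rw [this, hu0, zero_mul]
end
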